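/- arXiv:2102.07404 — 4 statements merged into one kernel-verified Lean document; each statement's English description precedes it below -/
import Mathlib

section
/- Variance estimator deviation bound (Lemma A.2): in a finite linear mixture Markov game, fix h ∈ {1,…,H}, a triple (s,a,b), a function V : S → ℝ with |V(s')| ≤ H for all s', vectors θ̂₀, θ̂₁ ∈ ℝ^d, and positive definite matrices Σ₀, Σ₁ ∈ ℝ^{d×d}. Define the true conditional variance 𝕍_h V(s,a,b) = [P_h V²](s,a,b) − ([P_h V](s,a,b))² and the estimate 𝕍^est = clip_{[0,H²]}(⟨φ_{V²}(s,a,b), θ̂₁⟩) − (clip_{[−H,H]}(⟨φ_V(s,a,b), θ̂₀⟩))². Then |𝕍^est − 𝕍_h V(s,a,b)| ≤ min{H², ‖φ_{V²}(s,a,b)‖_{Σ₁⁻¹} · ‖θ̂₁ − θ*_h‖_{Σ₁}} + min{H², 2H · ‖φ_V(s,a,b)‖_{Σ₀⁻¹} · ‖θ̂₀ − θ*_h‖_{Σ₀}}. -/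
open BigOperators Finset Matrix

/-- Projection of `x : ℝ` onto the interval `[l, u]`. -/
noncomputable def clip (l u x : ℝ) : ℝ := max l (min x u)

/-- Weighted (semi-)norm `‖x‖_M = √(xᵀ M x)`. -/
noncomputable def wnorm {d : ℕ} (M : Matrix (Fin d) (Fin d) ℝ) (x : Fin d → ℝ) : ℝ :=
  Real.sqrt (x ⬝ᵥ M.mulVec x)

/-- Validity of the data of a finite two-player zero-sum Markov game:
rewards in `[-1,1]` and transition kernels that are probability mass functions. -/
def IsGame {S A B : Type*} [Fintype S]
    (r : ℕ → S → A → B → ℝ) (P : ℕ → S → A → B → S → ℝ) : Prop :=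
  (∀ h s a b, -1 ≤ r h s a b ∧ r h s a b ≤ 1) ∧
  (∀ h s a b, (∀ s', 0 ≤ P h s a b s') ∧ ∑ s', P h s a b s' = 1)

lemma quad_nonneg {d : ℕ} {M : Matrix (Fin d) (Fin d) ℝ} (hM : M.PosSemidef)
    (x : Fin d → ℝ) : 0 ≤ x ⬝ᵥ M.mulVec x := by
  have := hM.re_dotProduct_nonneg x
  simpa using this

lemma cs_posSemidef {d : ℕ} {M : Matrix (Fin d) (Fin d) ℝ} (hM : M.PosSemidef)
    (x y : Fin d → ℝ) :
    (x ⬝ᵥ M.mulVec y)^2 ≤ (x ⬝ᵥ M.mulVec x) * (y ⬝ᵥ M.mulVec y) := by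
  classical
  have hsym : Mᵀ = M := by
    have h := hM.isHermitian
    simpa [Matrix.IsHermitian, Matrix.conjTranspose_eq_transpose_of_trivial] using h
  have hyx : y ⬝ᵥ M.mulVec x = x ⬝ᵥ M.mulVec y := by
    rw [Matrix.dotProduct_mulVec, ← Matrix.mulVec_transpose, hsym, dotProduct_comm]
  have hq : ∀ t : ℝ, 0 ≤ (y ⬝ᵥ M.mulVec y) * (t * t) + (2 * (x ⬝ᵥ M.mulVec y)) * t
      + (x ⬝ᵥ M.mulVec x) := by
    intro t
    have := quad_nonneg hM (x + t • y)
    simp only [Matrix.mulVec_add, Matrix.mulVec_smul, dotProduct_add, add_dotProduct,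
      dotProduct_smul, smul_dotProduct, smul_eq_mul, hyx] at this
    nlinarith [this]
  have hd := discrim_le_zero hq
  unfold discrim at hd
  nlinarith [hd]

lemma elliptical_cs {d : ℕ} {M : Matrix (Fin d) (Fin d) ℝ} (hM : M.PosDef)
    (x y : Fin d → ℝ) : |x ⬝ᵥ y| ≤ wnorm M⁻¹ x * wnorm M y := by
  classical
  have hinv : M * M⁻¹ = 1 := Matrix.mul_nonsing_inv M (isUnit_iff_ne_zero.mpr hM.det_pos.ne')
  set z := M⁻¹.mulVec x with hz
  have hMz : M.mulVec z = x := by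
    rw [hz, Matrix.mulVec_mulVec, hinv, Matrix.one_mulVec]
  have hsym : Mᵀ = M := by
    have h := hM.isHermitian
    simpa [Matrix.IsHermitian, Matrix.conjTranspose_eq_transpose_of_trivial] using h
  have h1 : x ⬝ᵥ y = z ⬝ᵥ M.mulVec y := by
    rw [← hMz, dotProduct_comm, Matrix.dotProduct_mulVec,
      ← Matrix.mulVec_transpose, hsym, dotProduct_comm]
  have h2 : z ⬝ᵥ M.mulVec z = x ⬝ᵥ M⁻¹.mulVec x := by
    rw [Matrix.dotProduct_mulVec z M, ← Matrix.mulVec_transpose, hsym, hMz]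
  have hcs := cs_posSemidef hM.posSemidef z y
  rw [h2] at hcs
  rw [h1]
  have hx0 : 0 ≤ x ⬝ᵥ M⁻¹.mulVec x := quad_nonneg (hM.inv).posSemidef x
  have hy0 : 0 ≤ y ⬝ᵥ M.mulVec y := quad_nonneg hM.posSemidef y
  have : |z ⬝ᵥ M.mulVec y| ≤ Real.sqrt ((x ⬝ᵥ M⁻¹.mulVec x) * (y ⬝ᵥ M.mulVec y)) := by
    rw [← Real.sqrt_sq_eq_abs]
    exact Real.sqrt_le_sqrt hcs
  calc |z ⬝ᵥ M.mulVec y| ≤ Real.sqrt ((x ⬝ᵥ M⁻¹.mulVec x) * (y ⬝ᵥ M.mulVec y)) := this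
    _ = wnorm M⁻¹ x * wnorm M y := Real.sqrt_mul hx0 _

lemma clip_close {l u t x : ℝ} (hl : l ≤ t) (hu : t ≤ u) :
    |clip l u x - t| ≤ |x - t| := by
  unfold clip
  rcases le_total x l with h1 | h1
  · rw [min_eq_left (h1.trans (hl.trans hu)), max_eq_left h1]
    rw [abs_of_nonpos (by linarith), abs_of_nonpos (by linarith)]; linarith
  · rcases le_total x u with h2 | h2
    · rw [min_eq_left h2, max_eq_right h1]
    · rw [min_eq_right h2, max_eq_right (hl.trans hu)]
      rw [abs_of_nonneg (by linarith), abs_of_nonneg (by linarith)]; linarith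

lemma clip_mem {l u : ℝ} (hlu : l ≤ u) (x : ℝ) : l ≤ clip l u x ∧ clip l u x ≤ u := by
  unfold clip
  constructor
  · exact le_max_left _ _
  · exact max_le hlu (min_le_right _ _)

lemma sum_smul_dotProduct {d : ℕ} {ι : Type*} [Fintype ι] (c : ι → ℝ)
    (f : ι → Fin d → ℝ) (v : Fin d → ℝ) :
    (∑ i, c i • f i) ⬝ᵥ v = ∑ i, c i * (f i ⬝ᵥ v) := by
  simp only [dotProduct, Finset.sum_apply, Pi.smul_apply, smul_eq_mul,
    Finset.sum_mul, Finset.mul_sum]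
  rw [Finset.sum_comm]
  simp [mul_assoc]

/-- Variance estimator deviation bound (Lemma A.2): in a finite `d`-dimensional linear
mixture Markov game, the clipped variance estimator built from `θ̂₀, θ̂₁` deviates from the
true one-step conditional variance of `V` by at most the two elliptical error terms. -/
theorem variance_estimator_bound
    {S A B : Type*} [Fintype S] [Fintype A] [Fintype B] {d : ℕ}
    (H : ℕ) (hH : 1 ≤ H)
    (r : ℕ → S → A → B → ℝ) (P : ℕ → S → A → B → S → ℝ)
    (hGame : IsGame r P)
    (φ : S → A → B → S → Fin d → ℝ) (θs : ℕ → Fin d → ℝ)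
    (hmix : ∀ h s a b s', P h s a b s' = φ s a b s' ⬝ᵥ θs h)
    (h : ℕ) (hh1 : 1 ≤ h) (hh2 : h ≤ H)
    (s : S) (a : A) (b : B)
    (V : S → ℝ) (hV : ∀ s', |V s'| ≤ (H : ℝ))
    (θ0 θ1 : Fin d → ℝ)
    (Sg0 Sg1 : Matrix (Fin d) (Fin d) ℝ) (hSg0 : Sg0.PosDef) (hSg1 : Sg1.PosDef) :
    |(clip 0 ((H : ℝ)^2) ((∑ s', (V s')^2 • φ s a b s') ⬝ᵥ θ1)
        - (clip (-(H : ℝ)) H ((∑ s', V s' • φ s a b s') ⬝ᵥ θ0))^2)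
      - ((∑ s', P h s a b s' * (V s')^2) - (∑ s', P h s a b s' * V s')^2)|
    ≤ min ((H : ℝ)^2)
        (wnorm Sg1⁻¹ (∑ s', (V s')^2 • φ s a b s') * wnorm Sg1 (θ1 - θs h))
      + min ((H : ℝ)^2)
        (2 * (H : ℝ) * (wnorm Sg0⁻¹ (∑ s', V s' • φ s a b s') * wnorm Sg0 (θ0 - θs h))) := by
  classical
  obtain ⟨-, hP⟩ := hGame
  obtain ⟨hPnn, hPsum⟩ := hP h s a b
  have hHpos : (0:ℝ) ≤ (H:ℝ) := Nat.cast_nonneg H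
  set φ1 := ∑ s', (V s')^2 • φ s a b s' with hφ1
  set φ0 := ∑ s', V s' • φ s a b s' with hφ0
  set t1 := ∑ s', P h s a b s' * (V s')^2 with ht1def
  set t0 := ∑ s', P h s a b s' * V s' with ht0def
  -- exact representation of the true quantities
  have ht1 : φ1 ⬝ᵥ θs h = t1 := by
    rw [hφ1, sum_smul_dotProduct, ht1def]
    exact Finset.sum_congr rfl fun s' _ => by rw [← hmix, mul_comm]
  have ht0 : φ0 ⬝ᵥ θs h = t0 := by
    rw [hφ0, sum_smul_dotProduct, ht0def]
    exact Finset.sum_congr rfl fun s' _ => by rw [← hmix, mul_comm]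
  -- bounds on the true quantities
  have hVsq : ∀ s', (V s')^2 ≤ (H:ℝ)^2 := fun s' => by
    have := hV s'; nlinarith [abs_nonneg (V s'), sq_abs (V s'), neg_abs_le (V s'), le_abs_self (V s')]
  have ht1nn : 0 ≤ t1 :=
    Finset.sum_nonneg fun s' _ => mul_nonneg (hPnn s') (sq_nonneg _)
  have ht1ub : t1 ≤ (H:ℝ)^2 := by
    calc t1 ≤ ∑ s', P h s a b s' * (H:ℝ)^2 :=
          Finset.sum_le_sum fun s' _ => mul_le_mul_of_nonneg_left (hVsq s') (hPnn s')
      _ = (H:ℝ)^2 := by rw [← Finset.sum_mul, hPsum, one_mul]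
  have ht0abs : |t0| ≤ (H:ℝ) := by
    calc |t0| ≤ ∑ s', |P h s a b s' * V s'| := Finset.abs_sum_le_sum_abs _ _
      _ ≤ ∑ s', P h s a b s' * (H:ℝ) := Finset.sum_le_sum fun s' _ => by
          rw [abs_mul, abs_of_nonneg (hPnn s')]
          exact mul_le_mul_of_nonneg_left (hV s') (hPnn s')
      _ = (H:ℝ) := by rw [← Finset.sum_mul, hPsum, one_mul]
  -- elliptical deviation bounds
  have dev1 : |φ1 ⬝ᵥ θ1 - t1| ≤ wnorm Sg1⁻¹ φ1 * wnorm Sg1 (θ1 - θs h) := by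
    rw [← ht1, ← dotProduct_sub]
    exact elliptical_cs hSg1 _ _
  have dev0 : |φ0 ⬝ᵥ θ0 - t0| ≤ wnorm Sg0⁻¹ φ0 * wnorm Sg0 (θ0 - θs h) := by
    rw [← ht0, ← dotProduct_sub]
    exact elliptical_cs hSg0 _ _
  set c1 := clip 0 ((H:ℝ)^2) (φ1 ⬝ᵥ θ1) with hc1def
  set c0 := clip (-(H:ℝ)) H (φ0 ⬝ᵥ θ0) with hc0def
  have hH2nn : (0:ℝ) ≤ (H:ℝ)^2 := sq_nonneg _
  have hc1mem := clip_mem hH2nn (φ1 ⬝ᵥ θ1)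
  have hc0mem := clip_mem (by linarith : -(H:ℝ) ≤ (H:ℝ)) (φ0 ⬝ᵥ θ0)
  have ht0l : -(H:ℝ) ≤ t0 := (abs_le.mp ht0abs).1
  have ht0u : t0 ≤ (H:ℝ) := (abs_le.mp ht0abs).2
  have hterm1 : |c1 - t1| ≤ min ((H:ℝ)^2) (wnorm Sg1⁻¹ φ1 * wnorm Sg1 (θ1 - θs h)) := by
    refine le_min ?_ (le_trans (clip_close ht1nn ht1ub) dev1)
    rw [abs_le]
    constructor <;> [linarith [hc1mem.1]; linarith [hc1mem.2]]
  have hc0close : |c0 - t0| ≤ |φ0 ⬝ᵥ θ0 - t0| := clip_close ht0l ht0u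
  have hterm0 : |c0^2 - t0^2| ≤ min ((H:ℝ)^2)
      (2 * (H:ℝ) * (wnorm Sg0⁻¹ φ0 * wnorm Sg0 (θ0 - θs h))) := by
    refine le_min ?_ ?_
    · have h1 : 0 ≤ c0^2 := sq_nonneg _
      have h2 : 0 ≤ t0^2 := sq_nonneg _
      have h3 : c0^2 ≤ (H:ℝ)^2 := by nlinarith [hc0mem.1, hc0mem.2]
      have h4 : t0^2 ≤ (H:ℝ)^2 := by nlinarith
      rw [abs_le]; constructor <;> linarith
    · have hfac : c0^2 - t0^2 = (c0 + t0) * (c0 - t0) := by ring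
      rw [hfac, abs_mul]
      have h5 : |c0 + t0| ≤ 2 * (H:ℝ) := by
        rw [abs_le]; constructor <;> [linarith [hc0mem.1]; linarith [hc0mem.2]]
      calc |c0 + t0| * |c0 - t0| ≤ (2 * (H:ℝ)) * |c0 - t0| :=
            mul_le_mul_of_nonneg_right h5 (abs_nonneg _)
        _ ≤ (2 * (H:ℝ)) * (wnorm Sg0⁻¹ φ0 * wnorm Sg0 (θ0 - θs h)) :=
            mul_le_mul_of_nonneg_left (hc0close.trans dev0) (by linarith)
  calc |c1 - c0^2 - (t1 - t0^2)| = |(c1 - t1) - (c0^2 - t0^2)| := by ring_nf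
    _ ≤ |c1 - t1| + |c0^2 - t0^2| := abs_sub _ _
    _ ≤ _ := add_le_add hterm1 hterm0
end

section
/- Clipped-square estimation error bound: let Σ ∈ ℝ^{d×d} be positive definite, φ, θ*, θ̂ ∈ ℝ^d, and H > 0, and suppose ⟨φ, θ*⟩ ∈ [−H, H]. Then |⟨φ, θ*⟩² − (clip_{[−H,H]}(⟨φ, θ̂⟩))²| ≤ min{H², 2H · ‖φ‖_{Σ⁻¹} · ‖θ̂ − θ*‖_Σ}. -/
open BigOperators Finset Matrix

private lemma cs_aux {d : ℕ} (Sg : Matrix (Fin d) (Fin d) ℝ) (hSg : Sg.PosDef)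
    (x y : Fin d → ℝ) :
    |x ⬝ᵥ y| ≤ wnorm Sg⁻¹ x * wnorm Sg y := by
  have hA : (Sg⁻¹).PosDef := hSg.inv
  set a : ℝ := y ⬝ᵥ Sg.mulVec y with ha
  set b : ℝ := x ⬝ᵥ y with hb
  set c : ℝ := x ⬝ᵥ Sg⁻¹.mulVec x with hc
  have hASy : Sg⁻¹.mulVec (Sg.mulVec y) = y := by
    rw [Matrix.mulVec_mulVec, Matrix.nonsing_inv_mul _ ((isUnit_iff_ne_zero.mpr hSg.det_pos.ne')), Matrix.one_mulVec]
  have hcross : (Sg.mulVec y) ⬝ᵥ Sg⁻¹.mulVec x = b := by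
    rw [Matrix.dotProduct_mulVec, ← Matrix.mulVec_transpose,
      ← Matrix.conjTranspose_eq_transpose_of_trivial, hA.isHermitian.eq, hASy, hb,
      dotProduct_comm]
  have hya : Sg *ᵥ y ⬝ᵥ y = a := by rw [ha, dotProduct_comm]
  have hkey : ∀ t : ℝ, 0 ≤ a * (t * t) + (2 * b) * t + c := by
    intro t
    have h0 := hA.posSemidef.dotProduct_mulVec_nonneg (x + t • Sg.mulVec y)
    simp only [star_trivial] at h0
    have hexp : (x + t • Sg.mulVec y) ⬝ᵥ Sg⁻¹.mulVec (x + t • Sg.mulVec y)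
        = a * (t * t) + (2 * b) * t + c := by
      simp only [Matrix.mulVec_add, Matrix.mulVec_smul, add_dotProduct,
        dotProduct_add, smul_dotProduct, dotProduct_smul,
        hASy, hcross, hya, smul_eq_mul, ← hb, ← hc]
      ring
    linarith [hexp ▸ h0]
  have hdisc : discrim a (2 * b) c ≤ 0 := discrim_le_zero hkey
  have hb2 : b ^ 2 ≤ c * a := by
    rw [discrim] at hdisc; nlinarith
  have hc0 : 0 ≤ c := by simpa using hA.posSemidef.dotProduct_mulVec_nonneg x
  have ha0 : 0 ≤ a := by simpa [ha] using hSg.posSemidef.dotProduct_mulVec_nonneg y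
  have : |b| = Real.sqrt (b ^ 2) := (Real.sqrt_sq_eq_abs b).symm
  rw [this, wnorm, wnorm, ← Real.sqrt_mul hc0]
  exact Real.sqrt_le_sqrt hb2

/-- Clipped-square estimation error bound: if `⟨φ, θ*⟩ ∈ [−H, H]`, then
`|⟨φ, θ*⟩² − (clip_{[−H,H]}⟨φ, θ̂⟩)²| ≤ min{H², 2H‖φ‖_{Σ⁻¹}‖θ̂ − θ*‖_Σ}`. -/
theorem clipped_square_bound
    {d : ℕ} (Sg : Matrix (Fin d) (Fin d) ℝ) (hSg : Sg.PosDef)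
    (φ θstar θhat : Fin d → ℝ) (H : ℝ) (hH : 0 < H)
    (hrange : -H ≤ φ ⬝ᵥ θstar ∧ φ ⬝ᵥ θstar ≤ H) :
    |(φ ⬝ᵥ θstar)^2 - (clip (-H) H (φ ⬝ᵥ θhat))^2|
      ≤ min (H^2) (2 * H * (wnorm Sg⁻¹ φ * wnorm Sg (θhat - θstar))) := by
  obtain ⟨h1, h2⟩ := hrange
  set a := φ ⬝ᵥ θstar
  set x := φ ⬝ᵥ θhat
  set b := clip (-H) H x with hbdef
  have hb1 : -H ≤ b := le_max_left _ _
  have hb2 : b ≤ H := by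
    rw [hbdef, clip]; exact max_le (by linarith) (min_le_right _ _)
  have hproj : |a - b| ≤ |a - x| := by
    rw [hbdef, clip]
    rcases le_total x (-H) with h | h
    · rw [max_eq_left (le_trans (min_le_left _ _) h)]
      rw [abs_sub_comm a (-H), abs_sub_comm a x]
      rw [abs_of_nonpos (by linarith), abs_of_nonpos (by linarith)]; linarith
    · rcases le_total H x with h' | h'
      · rw [min_eq_right h', max_eq_right (by linarith)]
        rw [abs_of_nonpos (by linarith), abs_of_nonpos (by linarith)]; linarith
      · rw [min_eq_left h', max_eq_right h]
  have hdiff : |a - x| ≤ wnorm Sg⁻¹ φ * wnorm Sg (θhat - θstar) := by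
    have : a - x = -(φ ⬝ᵥ (θhat - θstar)) := by
      rw [dotProduct_sub]; ring
    rw [this, abs_neg]
    exact cs_aux Sg hSg φ _
  refine le_min ?_ ?_
  · rw [abs_sub_le_iff]
    constructor <;> nlinarith
  · have h1' : |a ^ 2 - b ^ 2| = |a - b| * |a + b| := by
      rw [← abs_mul]; ring_nf
    rw [h1']
    have habs : |a + b| ≤ 2 * H := by rw [abs_le]; constructor <;> linarith
    calc |a - b| * |a + b| ≤ (wnorm Sg⁻¹ φ * wnorm Sg (θhat - θstar)) * (2 * H) := by
          apply mul_le_mul (le_trans hproj hdiff) habs (abs_nonneg _)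
          exact mul_nonneg (Real.sqrt_nonneg _) (Real.sqrt_nonneg _)
      _ = 2 * H * (wnorm Sg⁻¹ φ * wnorm Sg (θhat - θstar)) := by ring
end

section
/- Sandwiching of the correlated-policy value (Lemma B.3): in the setting described in the context, assume the confidence-set conditions ‖θ̄_h − θ*_h‖_{Σ̄_h} ≤ β and ‖θ̲_h − θ*_h‖_{Σ̲_h} ≤ β hold for every h ∈ {1,…,H}. Define the value of the correlated joint policy μ = (μ_h) by backward recursion: V_{H+1}^μ = 0; Q_h^μ(s,a,b) = r_h(s,a,b) + Σ_{s'} P_h(s'|s,a,b) V_{h+1}^μ(s'); V_h^μ(s) = Σ_{(a,b)} μ_h(a,b|s) Q_h^μ(s,a,b). Then for all h ∈ {1,…,H}, all s ∈ S, a ∈ A, b ∈ B: Q̲_h(s,a,b) ≤ Q_h^μ(s,a,b) ≤ Q̄_h(s,a,b), and V̲_h(s) ≤ V_h^μ(s) ≤ V̄_h(s). -/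
open BigOperators Finset Matrix

/-- The optimistic (`sgn = 1`) / pessimistic (`sgn = -1`) value functions of the
algorithm, defined by backward recursion on the number `t` of remaining steps:
`Vrec … t s` is `V̄`/`V̲` at step `h = H + 1 - t`. -/
noncomputable def Vrec {S A B : Type*} [Fintype S] [Fintype A] [Fintype B] {d : ℕ}
    (H : ℕ) (r : ℕ → S → A → B → ℝ) (φ : S → A → B → S → Fin d → ℝ)
    (θ : ℕ → Fin d → ℝ) (Sm : ℕ → Matrix (Fin d) (Fin d) ℝ) (β : ℝ) (sgn : ℝ)
    (μ : ℕ → S → A → B → ℝ) : ℕ → S → ℝ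
  | 0, _ => 0
  | t+1, s =>
      ∑ a, ∑ b, μ (H - t) s a b *
        clip (-(H : ℝ)) H (r (H - t) s a b
          + ((∑ s', Vrec H r φ θ Sm β sgn μ t s' • φ s a b s') ⬝ᵥ θ (H - t))
          + sgn * β * wnorm (Sm (H - t))⁻¹
              (∑ s', Vrec H r φ θ Sm β sgn μ t s' • φ s a b s'))

/-- The optimistic (`sgn = 1`) / pessimistic (`sgn = -1`) action-value estimate
`Q̄_h`/`Q̲_h` of the algorithm (it uses `V̄_{h+1}` = `Vrec … (H - h)`). -/
noncomputable def Qrec {S A B : Type*} [Fintype S] [Fintype A] [Fintype B] {d : ℕ}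
    (H : ℕ) (r : ℕ → S → A → B → ℝ) (φ : S → A → B → S → Fin d → ℝ)
    (θ : ℕ → Fin d → ℝ) (Sm : ℕ → Matrix (Fin d) (Fin d) ℝ) (β : ℝ) (sgn : ℝ)
    (μ : ℕ → S → A → B → ℝ) (h : ℕ) (s : S) (a : A) (b : B) : ℝ :=
  clip (-(H : ℝ)) H (r h s a b
    + ((∑ s', Vrec H r φ θ Sm β sgn μ (H - h) s' • φ s a b s') ⬝ᵥ θ h)
    + sgn * β * wnorm (Sm h)⁻¹
        (∑ s', Vrec H r φ θ Sm β sgn μ (H - h) s' • φ s a b s'))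

/-- `V̄_h`/`V̲_h` as a function of the step index `h`. -/
noncomputable def VrecAt {S A B : Type*} [Fintype S] [Fintype A] [Fintype B] {d : ℕ}
    (H : ℕ) (r : ℕ → S → A → B → ℝ) (φ : S → A → B → S → Fin d → ℝ)
    (θ : ℕ → Fin d → ℝ) (Sm : ℕ → Matrix (Fin d) (Fin d) ℝ) (β : ℝ) (sgn : ℝ)
    (μ : ℕ → S → A → B → ℝ) (h : ℕ) (s : S) : ℝ :=
  Vrec H r φ θ Sm β sgn μ (H + 1 - h) s

/-- Value `V^μ` of the correlated joint policy `μ`, by backward recursion on the number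
`t` of remaining steps: `Vmu … t s` is `V^μ` at step `h = H + 1 - t`. -/
noncomputable def Vmu {S A B : Type*} [Fintype S] [Fintype A] [Fintype B]
    (H : ℕ) (r : ℕ → S → A → B → ℝ) (P : ℕ → S → A → B → S → ℝ)
    (μ : ℕ → S → A → B → ℝ) : ℕ → S → ℝ
  | 0, _ => 0
  | t+1, s =>
      ∑ a, ∑ b, μ (H - t) s a b *
        (r (H - t) s a b + ∑ s', P (H - t) s a b s' * Vmu H r P μ t s')

/-- Action-value `Q^μ_h(s,a,b)` of the correlated joint policy `μ`. -/
noncomputable def Qmu {S A B : Type*} [Fintype S] [Fintype A] [Fintype B]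
    (H : ℕ) (r : ℕ → S → A → B → ℝ) (P : ℕ → S → A → B → S → ℝ)
    (μ : ℕ → S → A → B → ℝ) (h : ℕ) (s : S) (a : A) (b : B) : ℝ :=
  r h s a b + ∑ s', P h s a b s' * Vmu H r P μ (H - h) s'

lemma clip_mono {l u x y : ℝ} (h : x ≤ y) : clip l u x ≤ clip l u y :=
  max_le_max le_rfl (min_le_min h le_rfl)

lemma clip_eq {l u x : ℝ} (h1 : l ≤ x) (h2 : x ≤ u) : clip l u x = x := by
  unfold clip; rw [min_eq_left h2, max_eq_right h1]

lemma wnorm_nonneg {d : ℕ} (M : Matrix (Fin d) (Fin d) ℝ) (x : Fin d → ℝ) : 0 ≤ wnorm M x :=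
  Real.sqrt_nonneg _

lemma wnorm_sub_comm {d : ℕ} (M : Matrix (Fin d) (Fin d) ℝ) (x y : Fin d → ℝ) :
    wnorm M (x - y) = wnorm M (y - x) := by
  have h : y - x = -(x - y) := by ring
  rw [h, wnorm, wnorm, Matrix.mulVec_neg, dotProduct_neg, neg_dotProduct, neg_neg]

lemma dot_symm {d : ℕ} {M : Matrix (Fin d) (Fin d) ℝ} (hs : Mᵀ = M) (x y : Fin d → ℝ) :
    x ⬝ᵥ M *ᵥ y = y ⬝ᵥ M *ᵥ x := by
  have h2 : x ᵥ* M = M *ᵥ x := by conv_lhs => rw [← hs, Matrix.vecMul_transpose]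
  rw [Matrix.dotProduct_mulVec, h2, dotProduct_comm]

lemma cs_psd {d : ℕ} {M : Matrix (Fin d) (Fin d) ℝ} (hM : M.PosSemidef) (x y : Fin d → ℝ) :
    (x ⬝ᵥ M *ᵥ y) ^ 2 ≤ (x ⬝ᵥ M *ᵥ x) * (y ⬝ᵥ M *ᵥ y) := by
  have hs : Mᵀ = M := by
    have := hM.1
    rwa [Matrix.IsHermitian, Matrix.conjTranspose_eq_transpose_of_trivial] at this
  have key : ∀ t : ℝ, 0 ≤ (y ⬝ᵥ M *ᵥ y) * (t * t) + (2 * (x ⬝ᵥ M *ᵥ y)) * t + (x ⬝ᵥ M *ᵥ x) := by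
    intro t
    have h0 := hM.dotProduct_mulVec_nonneg (x + t • y)
    simp only [star_trivial] at h0
    have hexp : (x + t • y) ⬝ᵥ M *ᵥ (x + t • y)
        = (x ⬝ᵥ M *ᵥ x) + t * (x ⬝ᵥ M *ᵥ y) + t * (y ⬝ᵥ M *ᵥ x) + t * t * (y ⬝ᵥ M *ᵥ y) := by
      simp [Matrix.mulVec_add, Matrix.mulVec_smul, dotProduct_add, add_dotProduct,
        smul_dotProduct, dotProduct_smul, smul_eq_mul]
      ring
    rw [hexp, dot_symm hs y x] at h0
    nlinarith [h0]
  have := discrim_le_zero key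
  rw [discrim] at this
  nlinarith [this]

lemma cs_wnorm {d : ℕ} {M : Matrix (Fin d) (Fin d) ℝ} (hM : M.PosDef) (x y : Fin d → ℝ) :
    x ⬝ᵥ y ≤ wnorm M⁻¹ x * wnorm M y := by
  have hMi : M⁻¹.PosDef := Matrix.posDef_inv_iff.mpr hM
  have hdet : IsUnit M.det := (Matrix.isUnit_iff_isUnit_det M).mp hM.isUnit
  have h1 : M⁻¹ *ᵥ (M *ᵥ y) = y := by
    rw [Matrix.mulVec_mulVec, Matrix.nonsing_inv_mul M hdet, Matrix.one_mulVec]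
  have key := cs_psd hMi.posSemidef x (M *ᵥ y)
  rw [h1, dotProduct_comm (M *ᵥ y) y] at key
  have hxx : (0:ℝ) ≤ x ⬝ᵥ M⁻¹ *ᵥ x := by simpa using hMi.posSemidef.dotProduct_mulVec_nonneg x
  calc x ⬝ᵥ y ≤ |x ⬝ᵥ y| := le_abs_self _
    _ = Real.sqrt ((x ⬝ᵥ y) ^ 2) := (Real.sqrt_sq_eq_abs _).symm
    _ ≤ Real.sqrt ((x ⬝ᵥ M⁻¹ *ᵥ x) * (y ⬝ᵥ M *ᵥ y)) := Real.sqrt_le_sqrt key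
    _ = wnorm M⁻¹ x * wnorm M y := Real.sqrt_mul hxx _

lemma dot_eq {S : Type*} [Fintype S] {d : ℕ} (P : S → ℝ) (φ : S → Fin d → ℝ) (θ : Fin d → ℝ)
    (hmix : ∀ s', P s' = φ s' ⬝ᵥ θ) (V : S → ℝ) :
    ∑ s', P s' * V s' = (∑ s', V s' • φ s') ⬝ᵥ θ := by
  simp only [hmix, dotProduct, Finset.sum_apply, Pi.smul_apply, smul_eq_mul,
    Finset.sum_mul, Finset.mul_sum]
  rw [Finset.sum_comm]
  exact Finset.sum_congr rfl fun s' _ => Finset.sum_congr rfl fun i _ => by ring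

lemma vmu_abs {S A B : Type*} [Fintype S] [Fintype A] [Fintype B]
    (H : ℕ) (r : ℕ → S → A → B → ℝ) (P : ℕ → S → A → B → S → ℝ)
    (μ : ℕ → S → A → B → ℝ)
    (hr : ∀ h s a b, -1 ≤ r h s a b ∧ r h s a b ≤ 1)
    (hP : ∀ h s a b, (∀ s', 0 ≤ P h s a b s') ∧ ∑ s', P h s a b s' = 1)
    (hμ : ∀ h s, (∀ a b, 0 ≤ μ h s a b) ∧ ∑ a, ∑ b, μ h s a b = 1) :
    ∀ t s, |Vmu H r P μ t s| ≤ t := by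
  intro t
  induction t with
  | zero => intro s; simp [Vmu]
  | succ t ih =>
    intro s
    have hterm : ∀ a b,
        |r (H-t) s a b + ∑ s', P (H-t) s a b s' * Vmu H r P μ t s'| ≤ (t:ℝ) + 1 := by
      intro a b
      have h1 : |∑ s', P (H-t) s a b s' * Vmu H r P μ t s'| ≤ (t:ℝ) := by
        calc |∑ s', P (H-t) s a b s' * Vmu H r P μ t s'|
            ≤ ∑ s', |P (H-t) s a b s' * Vmu H r P μ t s'| := Finset.abs_sum_le_sum_abs _ _
          _ ≤ ∑ s', P (H-t) s a b s' * (t:ℝ) := by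
              refine Finset.sum_le_sum fun s' _ => ?_
              rw [abs_mul, abs_of_nonneg ((hP _ s a b).1 s')]
              exact mul_le_mul_of_nonneg_left (ih s') ((hP _ s a b).1 s')
          _ = (t:ℝ) := by rw [← Finset.sum_mul, (hP _ s a b).2, one_mul]
      have h2 := hr (H-t) s a b
      rw [abs_le] at h1 ⊢
      constructor <;> linarith [h2.1, h2.2, h1.1, h1.2]
    have hmain : |Vmu H r P μ (t+1) s| ≤ ∑ a, ∑ b, μ (H-t) s a b * ((t:ℝ)+1) := by
      simp only [Vmu]
      calc |∑ a, ∑ b, μ (H-t) s a b *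
              (r (H-t) s a b + ∑ s', P (H-t) s a b s' * Vmu H r P μ t s')|
          ≤ ∑ a, |∑ b, μ (H-t) s a b *
              (r (H-t) s a b + ∑ s', P (H-t) s a b s' * Vmu H r P μ t s')| :=
            Finset.abs_sum_le_sum_abs _ _
        _ ≤ ∑ a, ∑ b, |μ (H-t) s a b *
              (r (H-t) s a b + ∑ s', P (H-t) s a b s' * Vmu H r P μ t s')| :=
            Finset.sum_le_sum fun a _ => Finset.abs_sum_le_sum_abs _ _
        _ ≤ ∑ a, ∑ b, μ (H-t) s a b * ((t:ℝ)+1) := by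
            refine Finset.sum_le_sum fun a _ => Finset.sum_le_sum fun b _ => ?_
            rw [abs_mul, abs_of_nonneg ((hμ _ s).1 a b)]
            exact mul_le_mul_of_nonneg_left (hterm a b) ((hμ _ s).1 a b)
    have hsum : ∑ a, ∑ b, μ (H-t) s a b * ((t:ℝ)+1) = (t:ℝ)+1 := by
      simp_rw [← Finset.sum_mul]
      rw [(hμ (H-t) s).2, one_mul]
    rw [hsum] at hmain
    push_cast
    exact hmain

/-- Sandwiching of the correlated-policy value (Lemma B.3): under the confidence-set
conditions, `Q̲_h ≤ Q^μ_h ≤ Q̄_h` and `V̲_h ≤ V^μ_h ≤ V̄_h` for all steps and states. -/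
theorem correlated_value_sandwich
    {S A B : Type*} [Fintype S] [Fintype A] [Fintype B]
    [Nonempty S] [Nonempty A] [Nonempty B] {d : ℕ}
    (H : ℕ) (hH : 1 ≤ H)
    (r : ℕ → S → A → B → ℝ) (P : ℕ → S → A → B → S → ℝ)
    (hGame : IsGame r P)
    (φ : S → A → B → S → Fin d → ℝ) (θs : ℕ → Fin d → ℝ)
    (hmix : ∀ h s a b s', P h s a b s' = φ s a b s' ⬝ᵥ θs h)
    (β : ℝ) (hβ : 0 < β)
    (θb θl : ℕ → Fin d → ℝ)
    (Sb Sl : ℕ → Matrix (Fin d) (Fin d) ℝ)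
    (hSb : ∀ h, (Sb h).PosDef) (hSl : ∀ h, (Sl h).PosDef)
    (μ : ℕ → S → A → B → ℝ)
    (hμ : ∀ h s, (∀ a b, 0 ≤ μ h s a b) ∧ ∑ a, ∑ b, μ h s a b = 1)
    (hconf : ∀ h, 1 ≤ h → h ≤ H →
      wnorm (Sb h) (θb h - θs h) ≤ β ∧ wnorm (Sl h) (θl h - θs h) ≤ β) :
    ∀ h, 1 ≤ h → h ≤ H → ∀ (s : S) (a : A) (b : B),
      (Qrec H r φ θl Sl β (-1) μ h s a b ≤ Qmu H r P μ h s a b ∧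
        Qmu H r P μ h s a b ≤ Qrec H r φ θb Sb β 1 μ h s a b) ∧
      (VrecAt H r φ θl Sl β (-1) μ h s ≤ Vmu H r P μ (H + 1 - h) s ∧
        Vmu H r P μ (H + 1 - h) s ≤ VrecAt H r φ θb Sb β 1 μ h s) := by
  obtain ⟨hr, hP⟩ := hGame
  have habs := vmu_abs H r P μ hr hP hμ
  have Qb : ∀ h, 1 ≤ h → h ≤ H →
      (∀ s, Vrec H r φ θl Sl β (-1) μ (H - h) s ≤ Vmu H r P μ (H - h) s ∧
        Vmu H r P μ (H - h) s ≤ Vrec H r φ θb Sb β 1 μ (H - h) s) →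
      ∀ s a b, Qrec H r φ θl Sl β (-1) μ h s a b ≤ Qmu H r P μ h s a b ∧
        Qmu H r P μ h s a b ≤ Qrec H r φ θb Sb β 1 μ h s a b := by
    intro h h1 hH VIH s a b
    have hq : |Qmu H r P μ h s a b| ≤ (H:ℝ) := by
      have h1' : |∑ s', P h s a b s' * Vmu H r P μ (H-h) s'| ≤ ((H-h:ℕ):ℝ) := by
        calc |∑ s', P h s a b s' * Vmu H r P μ (H-h) s'|
            ≤ ∑ s', |P h s a b s' * Vmu H r P μ (H-h) s'| := Finset.abs_sum_le_sum_abs _ _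
          _ ≤ ∑ s', P h s a b s' * ((H-h:ℕ):ℝ) := by
              refine Finset.sum_le_sum fun s' _ => ?_
              rw [abs_mul, abs_of_nonneg ((hP h s a b).1 s')]
              exact mul_le_mul_of_nonneg_left (habs _ s') ((hP h s a b).1 s')
          _ = ((H-h:ℕ):ℝ) := by rw [← Finset.sum_mul, (hP h s a b).2, one_mul]
      have hr' := hr h s a b
      have hcast : ((H-h:ℕ):ℝ) = (H:ℝ) - h := by rw [Nat.cast_sub hH]
      have hh1 : (1:ℝ) ≤ (h:ℝ) := by exact_mod_cast h1
      rw [abs_le] at h1' ⊢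
      rw [hcast] at h1'
      unfold Qmu
      constructor <;> linarith [hr'.1, hr'.2, h1'.1, h1'.2]
    have hqc : clip (-(H:ℝ)) H (Qmu H r P μ h s a b) = Qmu H r P μ h s a b := by
      rw [abs_le] at hq; exact clip_eq (by linarith [hq.1]) hq.2
    have hPnn := (hP h s a b).1
    constructor
    · -- lower bound
      unfold Qrec
      set y := ∑ s', Vrec H r φ θl Sl β (-1) μ (H - h) s' • φ s a b s' with hy
      have hcs := cs_wnorm (hSl h) y (θl h - θs h)
      have hcf : wnorm (Sl h) (θl h - θs h) ≤ β := (hconf h h1 hH).2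
      have hWnn := wnorm_nonneg (Sl h)⁻¹ y
      rw [dotProduct_sub] at hcs
      have hys : y ⬝ᵥ θs h = ∑ s', P h s a b s' * Vrec H r φ θl Sl β (-1) μ (H-h) s' :=
        (dot_eq (P h s a b) (φ s a b) (θs h) (fun s' => hmix h s a b s') _).symm
      have hsum : ∑ s', P h s a b s' * Vrec H r φ θl Sl β (-1) μ (H-h) s'
          ≤ ∑ s', P h s a b s' * Vmu H r P μ (H-h) s' :=
        Finset.sum_le_sum fun s' _ => mul_le_mul_of_nonneg_left ((VIH s').1) (hPnn s')
      have hprod : wnorm (Sl h)⁻¹ y * wnorm (Sl h) (θl h - θs h)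
          ≤ wnorm (Sl h)⁻¹ y * β := mul_le_mul_of_nonneg_left hcf hWnn
      have hinner : r h s a b + y ⬝ᵥ θl h + (-1) * β * wnorm (Sl h)⁻¹ y
          ≤ Qmu H r P μ h s a b := by
        unfold Qmu
        have h3 : y ⬝ᵥ θl h - β * wnorm (Sl h)⁻¹ y ≤ y ⬝ᵥ θs h := by linarith
        rw [hys] at h3
        linarith
      rw [← hqc]
      exact clip_mono hinner
    · -- upper bound
      unfold Qrec
      set x := ∑ s', Vrec H r φ θb Sb β 1 μ (H - h) s' • φ s a b s' with hx
      have hcs := cs_wnorm (hSb h) x (θs h - θb h)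
      have hcf : wnorm (Sb h) (θs h - θb h) ≤ β := by
        rw [wnorm_sub_comm]; exact (hconf h h1 hH).1
      have hWnn := wnorm_nonneg (Sb h)⁻¹ x
      rw [dotProduct_sub] at hcs
      have hxs : x ⬝ᵥ θs h = ∑ s', P h s a b s' * Vrec H r φ θb Sb β 1 μ (H-h) s' :=
        (dot_eq (P h s a b) (φ s a b) (θs h) (fun s' => hmix h s a b s') _).symm
      have hsum : ∑ s', P h s a b s' * Vmu H r P μ (H-h) s'
          ≤ ∑ s', P h s a b s' * Vrec H r φ θb Sb β 1 μ (H-h) s' :=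
        Finset.sum_le_sum fun s' _ => mul_le_mul_of_nonneg_left ((VIH s').2) (hPnn s')
      have hprod : wnorm (Sb h)⁻¹ x * wnorm (Sb h) (θs h - θb h)
          ≤ wnorm (Sb h)⁻¹ x * β := mul_le_mul_of_nonneg_left hcf hWnn
      have hinner : Qmu H r P μ h s a b
          ≤ r h s a b + x ⬝ᵥ θb h + 1 * β * wnorm (Sb h)⁻¹ x := by
        unfold Qmu
        have h3 : x ⬝ᵥ θs h ≤ x ⬝ᵥ θb h + β * wnorm (Sb h)⁻¹ x := by linarith
        rw [hxs] at h3
        linarith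
      rw [← hqc]
      exact clip_mono hinner
  have key : ∀ t, t ≤ H → ∀ s,
      Vrec H r φ θl Sl β (-1) μ t s ≤ Vmu H r P μ t s ∧
      Vmu H r P μ t s ≤ Vrec H r φ θb Sb β 1 μ t s := by
    intro t
    induction t with
    | zero => intro _ s; exact ⟨le_refl 0, le_refl 0⟩
    | succ t ih =>
      intro ht s
      have htH : t ≤ H := Nat.le_of_succ_le ht
      have hone : 1 ≤ H - t := by omega
      have hH2 : H - t ≤ H := Nat.sub_le H t
      have hsub : H - (H - t) = t := Nat.sub_sub_self htH
      have hQ := Qb (H - t) hone hH2 (by rw [hsub]; exact fun s => ih htH s)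
      have eV : Vmu H r P μ (t+1) s
          = ∑ a, ∑ b, μ (H-t) s a b * Qmu H r P μ (H-t) s a b := by
        simp only [Vmu, Qmu, hsub]
      have eVl : Vrec H r φ θl Sl β (-1) μ (t+1) s
          = ∑ a, ∑ b, μ (H-t) s a b * Qrec H r φ θl Sl β (-1) μ (H-t) s a b := by
        simp only [Vrec, Qrec, hsub]
      have eVb : Vrec H r φ θb Sb β 1 μ (t+1) s
          = ∑ a, ∑ b, μ (H-t) s a b * Qrec H r φ θb Sb β 1 μ (H-t) s a b := by
        simp only [Vrec, Qrec, hsub]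
      constructor
      · rw [eVl, eV]
        refine Finset.sum_le_sum fun a _ => Finset.sum_le_sum fun b _ => ?_
        exact mul_le_mul_of_nonneg_left (hQ s a b).1 ((hμ _ s).1 a b)
      · rw [eVb, eV]
        refine Finset.sum_le_sum fun a _ => Finset.sum_le_sum fun b _ => ?_
        exact mul_le_mul_of_nonneg_left (hQ s a b).2 ((hμ _ s).1 a b)
  intro h h1 hH s a b
  have hQ := Qb h h1 hH (fun s => key (H - h) (Nat.sub_le H h) s) s a b
  refine ⟨hQ, ?_⟩
  have hsub1 : H + 1 - h = (H - h) + 1 := by omega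
  have hk := key ((H-h)+1) (by omega) s
  unfold VrecAt
  rw [hsub1]
  exact hk
end

section
/- Elliptical potential lemma (Lemma D.2): for any vectors x_1, …, x_T ∈ ℝ^d with ‖x_t‖₂ ≤ L for all t, define A_0 = λ I_d and A_t = A_0 + Σ_{i=1}^t x_i x_iᵀ (where λ > 0). Then Σ_{t=1}^T min{1, x_tᵀ A_{t−1}⁻¹ x_t} ≤ 2 d log( (dλ + T L²) / (dλ) ). -/
open BigOperators Finset Matrix


lemma min_one_le_two_log {u : ℝ} (hu : 0 ≤ u) : min 1 u ≤ 2 * Real.log (1 + u) := by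
  have h1 : (0:ℝ) < 1 + u := by linarith
  rcases le_total u 1 with h | h
  · have hlog : 1 - (1+u)⁻¹ ≤ Real.log (1+u) := Real.one_sub_inv_le_log_of_pos h1
    have heq : 1 - (1+u)⁻¹ = u / (1+u) := by field_simp; ring
    have h2 : u ≤ 2 * (u / (1+u)) := by
      rw [mul_div_assoc', le_div_iff₀ h1]
      nlinarith
    calc min 1 u ≤ u := min_le_right _ _
      _ ≤ 2 * (u / (1+u)) := h2
      _ ≤ 2 * Real.log (1+u) := by rw [← heq] at *; linarith
  · have hl2 : (1:ℝ) ≤ 2 * Real.log 2 := by nlinarith [Real.log_two_gt_d9]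
    calc min 1 u ≤ 1 := min_le_left _ _
      _ ≤ 2 * Real.log 2 := hl2
      _ ≤ 2 * Real.log (1+u) := by
          have := Real.log_le_log (by norm_num) (by linarith : (2:ℝ) ≤ 1 + u)
          linarith

lemma trace_eq_sum_eigs {n : Type*} [Fintype n] [DecidableEq n] {A : Matrix n n ℝ}
    (hA : A.IsHermitian) : A.trace = ∑ i, hA.eigenvalues i := by
  simpa using hA.trace_eq_sum_eigenvalues

lemma det_le_trace_div_pow {d : ℕ} (hd : 0 < d) {A : Matrix (Fin d) (Fin d) ℝ}
    (hA : A.PosDef) : A.det ≤ (A.trace / d) ^ d := by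
  have hdR : (0:ℝ) < d := by exact_mod_cast hd
  have hz : ∀ i ∈ Finset.univ, (0:ℝ) ≤ hA.1.eigenvalues i :=
    fun i _ => hA.posSemidef.eigenvalues_nonneg i
  have hgm := Real.geom_mean_le_arith_mean_weighted Finset.univ (fun _ => (d:ℝ)⁻¹)
      hA.1.eigenvalues (fun i _ => by positivity)
      (by simp [Finset.sum_const, Fintype.card_fin]; field_simp) hz
  have hsum : ∑ i, (d:ℝ)⁻¹ * hA.1.eigenvalues i = A.trace / d := by
    rw [← Finset.mul_sum, trace_eq_sum_eigs hA.1]; ring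
  rw [hsum] at hgm
  have hprodnn : (0:ℝ) ≤ ∏ i, hA.1.eigenvalues i ^ ((d:ℝ)⁻¹) :=
    Finset.prod_nonneg fun i _ => Real.rpow_nonneg (hz i (Finset.mem_univ i)) _
  have hpow := pow_le_pow_left₀ hprodnn hgm d
  have hlhs : (∏ i, hA.1.eigenvalues i ^ ((d:ℝ)⁻¹)) ^ d = ∏ i, hA.1.eigenvalues i := by
    rw [← Finset.prod_pow]
    refine Finset.prod_congr rfl fun i _ => ?_
    rw [← Real.rpow_natCast (hA.1.eigenvalues i ^ ((d:ℝ)⁻¹)) d,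
      ← Real.rpow_mul (hz i (Finset.mem_univ i)), inv_mul_cancel₀ hdR.ne', Real.rpow_one]
  rw [hlhs] at hpow
  have hdet : A.det = ∏ i, hA.1.eigenvalues i := by
    simpa using hA.1.det_eq_prod_eigenvalues
  rw [hdet]; exact hpow

lemma det_add_vecMulVec {d : ℕ} {A : Matrix (Fin d) (Fin d) ℝ} (hA : A.PosDef)
    (v : Fin d → ℝ) :
    (A + vecMulVec v v).det = A.det * (1 + v ⬝ᵥ A⁻¹.mulVec v) := by
  rw [vecMulVec_eq Unit, Matrix.det_add_replicateCol_mul_replicateRow (isUnit_iff_ne_zero.mpr hA.det_pos.ne') v v]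
  congr 1
  rw [det_unique]
  simp only [Matrix.add_apply, Matrix.one_apply_eq, Matrix.mul_apply, Matrix.replicateRow_apply,
    Matrix.replicateCol_apply, dotProduct, Matrix.mulVec, Finset.sum_mul, Finset.mul_sum]
  rw [Finset.sum_comm]
  congr 1
  exact Finset.sum_congr rfl fun i _ => Finset.sum_congr rfl fun j _ => by ring

lemma posSemidef_vecMulVec_self {d : ℕ} (v : Fin d → ℝ) : (vecMulVec v v).PosSemidef := by
  have : vecMulVec v v = replicateCol Unit v * (replicateCol Unit v)ᴴ := by
    rw [conjTranspose_replicateCol, star_trivial, vecMulVec_eq Unit]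
  rw [this]
  exact Matrix.posSemidef_self_mul_conjTranspose _

/-- Elliptical potential lemma (Lemma D.2): for vectors `x_1, …, x_T` with `‖x_t‖₂ ≤ L`,
`A_0 = λI` and `A_t = A_{t-1} + x_t x_tᵀ`, one has
`Σ_{t=1}^T min{1, ‖x_t‖²_{A_{t-1}⁻¹}} ≤ 2d log((dλ + TL²)/(dλ))`. -/
theorem elliptical_potential
    {d T : ℕ} (hd : 1 ≤ d)
    (lam L : ℝ) (hlam : 0 < lam) (hL : 0 < L)
    (x : ℕ → Fin d → ℝ)
    (hx : ∀ t, 1 ≤ t → t ≤ T → Real.sqrt (x t ⬝ᵥ x t) ≤ L)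
    (Amat : ℕ → Matrix (Fin d) (Fin d) ℝ)
    (hA0 : Amat 0 = lam • (1 : Matrix (Fin d) (Fin d) ℝ))
    (hA : ∀ t, Amat (t + 1) = Amat t + Matrix.vecMulVec (x (t + 1)) (x (t + 1))) :
    ∑ t ∈ Finset.Icc 1 T, min 1 (x t ⬝ᵥ (Amat (t - 1))⁻¹.mulVec (x t))
      ≤ 2 * d * Real.log ((d * lam + T * L ^ 2) / (d * lam)) := by
  have hdR : (0:ℝ) < d := by exact_mod_cast hd
  set u : ℕ → ℝ := fun t => x t ⬝ᵥ (Amat (t - 1))⁻¹.mulVec (x t) with hu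
  show ∑ t ∈ Finset.Icc 1 T, min 1 (u t) ≤ _
  -- positive definiteness
  have hpos : ∀ t, (Amat t).PosDef := by
    intro t; induction t with
    | zero =>
        rw [hA0, Matrix.smul_one_eq_diagonal]
        exact (Matrix.posDef_diagonal_iff).mpr fun _ => hlam
    | succ n ih =>
        rw [hA n]
        exact ih.add_posSemidef (posSemidef_vecMulVec_self _)
  have hu0 : ∀ t, 0 ≤ u t := by
    intro t
    have h := ((hpos (t-1)).inv).posSemidef.dotProduct_mulVec_nonneg (x t)
    simpa [hu] using h
  -- log-det telescope
  have hdet : ∀ n, Real.log (Amat n).det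
      = d * Real.log lam + ∑ t ∈ Finset.Icc 1 n, Real.log (1 + u t) := by
    intro n; induction n with
    | zero => simp [hA0, Matrix.det_smul, Fintype.card_fin, Real.log_pow]
    | succ n ih =>
        have h1p : (0:ℝ) < 1 + x (n+1) ⬝ᵥ (Amat n)⁻¹.mulVec (x (n+1)) := by
          have := hu0 (n+1)
          simp only [hu, Nat.add_sub_cancel] at this
          linarith
        rw [hA n, det_add_vecMulVec (hpos n),
          Real.log_mul (hpos n).det_pos.ne' h1p.ne', ih,
          Finset.sum_Icc_succ_top (by omega : 1 ≤ n+1)]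
        simp only [hu, Nat.add_sub_cancel]
        ring
  -- trace
  have htr : ∀ n, (Amat n).trace = d * lam + ∑ t ∈ Finset.Icc 1 n, (x t ⬝ᵥ x t) := by
    intro n; induction n with
    | zero => simp [hA0, Matrix.trace_smul, Matrix.trace_one, Fintype.card_fin, mul_comm]
    | succ n ih =>
        rw [hA n, Matrix.trace_add, ih, vecMulVec_eq Unit, Matrix.trace_replicateCol_mul_replicateRow,
          Finset.sum_Icc_succ_top (by omega : 1 ≤ n+1)]
        ring
  have htrT : (Amat T).trace ≤ d * lam + T * L^2 := by
    rw [htr T]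
    have hbd : ∑ t ∈ Finset.Icc 1 T, (x t ⬝ᵥ x t) ≤ ∑ t ∈ Finset.Icc 1 T, L^2 := by
      refine Finset.sum_le_sum fun t ht => ?_
      obtain ⟨h1, h2⟩ := Finset.mem_Icc.mp ht
      have hnn : 0 ≤ x t ⬝ᵥ x t := Finset.sum_nonneg fun i _ => mul_self_nonneg _
      have hs := hx t h1 h2
      nlinarith [Real.sq_sqrt hnn, Real.sqrt_nonneg (x t ⬝ᵥ x t)]
    have : ∑ t ∈ Finset.Icc 1 T, (L^2 : ℝ) = T * L^2 := by
      rw [Finset.sum_const, Nat.card_Icc]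
      simp [nsmul_eq_mul]
    linarith
  -- det bound
  have h1 : (0:ℝ) < d * lam + T * L^2 := by positivity
  have htrpos : 0 ≤ (Amat T).trace / d := by
    rw [htr T]
    have : 0 ≤ ∑ t ∈ Finset.Icc 1 T, (x t ⬝ᵥ x t) :=
      Finset.sum_nonneg fun t _ => Finset.sum_nonneg fun i _ => mul_self_nonneg _
    positivity
  have hdetle : (Amat T).det ≤ ((d * lam + T * L^2) / d) ^ d := by
    refine (det_le_trace_div_pow hd (hpos T)).trans ?_
    refine pow_le_pow_left₀ htrpos ?_ d
    gcongr
  have hlogdet : Real.log (Amat T).det ≤ d * Real.log ((d * lam + T * L^2) / d) := by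
    calc Real.log (Amat T).det ≤ Real.log (((d * lam + T * L^2) / d) ^ d) :=
          Real.log_le_log (hpos T).det_pos hdetle
      _ = d * Real.log ((d * lam + T * L^2) / d) := by rw [Real.log_pow]
  have hsum : ∑ t ∈ Finset.Icc 1 T, min 1 (u t)
      ≤ 2 * ∑ t ∈ Finset.Icc 1 T, Real.log (1 + u t) := by
    rw [Finset.mul_sum]
    exact Finset.sum_le_sum fun t _ => min_one_le_two_log (hu0 t)
  have hkey : ∑ t ∈ Finset.Icc 1 T, Real.log (1 + u t)
      = Real.log (Amat T).det - d * Real.log lam := by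
    rw [hdet T]; ring
  have h2 : (0:ℝ) < d * lam := by positivity
  calc ∑ t ∈ Finset.Icc 1 T, min 1 (u t)
      ≤ 2 * (Real.log (Amat T).det - d * Real.log lam) := by rw [← hkey]; exact hsum
    _ ≤ 2 * (d * Real.log ((d * lam + T * L^2) / d) - d * Real.log lam) := by linarith
    _ = 2 * d * Real.log ((d * lam + T * L ^ 2) / (d * lam)) := by
        rw [Real.log_div h1.ne' h2.ne', Real.log_div h1.ne' hdR.ne',
          Real.log_mul hdR.ne' hlam.ne']
        ring
end
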